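/- arXiv:2510.01032 — 2 statements merged into one kernel-verified Lean document; each statement's English description precedes it below -/
import Mathlib

section
/- Let ι be an index type, f : ι → ℝ a score function, E a real vector space, V : ι → E a value assignment, and let S and M be disjoint nonempty finite subsets of ι with T = S ∪ M. Suppose V j = v for every j ∈ M (all appended tokens have the identical value vector v). Set λ = (∑_{j ∈ S} exp(f j)) / (∑_{j ∈ T} exp(f j)). Then 0 < λ < 1 and the attention output over T satisfies ∑_{j ∈ T} (exp(f j)/∑_{k ∈ T} exp(f k)) • V j = λ • (∑_{j ∈ S} (exp(f j)/∑_{k ∈ S} exp(f k)) • V j) + (1 − λ) • v; that is, the new attention output is an affine transformation of the original attention output: Attn_new = λ · Attn_old + Σ_σ with bias term Σ_σ = (1 − λ) • v. -/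
/-- Inserting a block `M` of meaningless tokens with identical value vector `v` turns
the attention output over `T = S ∪ M` into an affine transformation of the attention
output over `S`: `Attn_new = lam • Attn_old + (1 - lam) • v`, with `0 < lam < 1`. -/
theorem attention_affine_transform {ι : Type*} [DecidableEq ι] {E : Type*}
    [AddCommGroup E] [Module ℝ E] (f : ι → ℝ) (V : ι → E) (v : E)
    (S M T : Finset ι) (hdisj : Disjoint S M) (hS : S.Nonempty) (hM : M.Nonempty)
    (hT : T = S ∪ M) (hv : ∀ j ∈ M, V j = v) (lam : ℝ)
    (hlam : lam = (∑ j ∈ S, Real.exp (f j)) / (∑ j ∈ T, Real.exp (f j))) :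
    (0 < lam ∧ lam < 1) ∧
      ∑ j ∈ T, (Real.exp (f j) / ∑ k ∈ T, Real.exp (f k)) • V j =
        lam • (∑ j ∈ S, (Real.exp (f j) / ∑ k ∈ S, Real.exp (f k)) • V j)
          + (1 - lam) • v := by
  subst hT
  have hA : 0 < ∑ j ∈ S, Real.exp (f j) := Finset.sum_pos (fun i _ => Real.exp_pos _) hS
  have hB : 0 < ∑ j ∈ M, Real.exp (f j) := Finset.sum_pos (fun i _ => Real.exp_pos _) hM
  have hU : ∑ j ∈ S ∪ M, Real.exp (f j) = (∑ j ∈ S, Real.exp (f j)) + ∑ j ∈ M, Real.exp (f j) :=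
    Finset.sum_union hdisj
  set A := ∑ j ∈ S, Real.exp (f j) with hAdef
  set B := ∑ j ∈ M, Real.exp (f j) with hBdef
  have hAB : 0 < A + B := by linarith
  subst hlam
  rw [hU]
  refine ⟨⟨by positivity, by rw [div_lt_one hAB]; linarith⟩, ?_⟩
  rw [Finset.sum_union hdisj]
  have h1 : ∑ j ∈ M, (Real.exp (f j) / (A + B)) • V j = (B / (A + B)) • v := by
    rw [Finset.sum_congr rfl (fun j hj => by rw [hv j hj]), ← Finset.sum_smul, ← Finset.sum_div]
  have h2 : (A / (A + B)) • (∑ j ∈ S, (Real.exp (f j) / A) • V j)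
      = ∑ j ∈ S, (Real.exp (f j) / (A + B)) • V j := by
    rw [Finset.smul_sum]
    refine Finset.sum_congr rfl fun j _ => ?_
    rw [smul_smul]
    congr 1
    field_simp
  rw [h1, h2]
  congr 1
  have : (1 : ℝ) - A / (A + B) = B / (A + B) := by
    field_simp
    ring
  rw [this]
end

section
/- Let (Ω, ℱ, μ) be a probability space, σ : Ω → ℝ measurable with ∫ σ dμ = 0 and ∫ σ⁴ dμ < ∞, let a ∈ ℝ, and let φ : ℝ → ℝ be twice differentiable with |φ''(x)| ≤ M for all x ∈ ℝ. Then φ(a + σ) is square-integrable and | Var[φ(a + σ)] − (φ'(a))² · Var[σ] | ≤ |φ'(a)| · M · ∫ |σ|³ dμ + (M²/4) · ∫ σ⁴ dμ. -/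
open MeasureTheory ProbabilityTheory

section TaylorAux
open intervalIntegral in
theorem taylor_aux (a : ℝ) (φ : ℝ → ℝ) (M : ℝ)
    (hφ : Differentiable ℝ φ) (hφ' : Differentiable ℝ (deriv φ))
    (hφ'' : ∀ x : ℝ, |deriv (deriv φ) x| ≤ M) :
    ∀ t : ℝ, |φ (a + t) - φ a - deriv φ a * t| ≤ M / 2 * t ^ 2 := by
  have hM : 0 ≤ M := (abs_nonneg _).trans (hφ'' 0)
  have hlip : ∀ x y : ℝ, |deriv φ x - deriv φ y| ≤ M * |x - y| := by
    intro x y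
    exact Convex.norm_image_sub_le_of_norm_deriv_le (fun z _ => hφ'.differentiableAt)
      (fun z _ => hφ'' z) convex_univ trivial trivial
  intro t
  have hcont : Continuous (fun s => deriv φ (a + s)) :=
    hφ'.continuous.comp (continuous_const.add continuous_id)
  have hint : IntervalIntegrable (fun s => deriv φ (a + s)) volume 0 t :=
    hcont.intervalIntegrable 0 t
  have hftc : ∫ s in (0:ℝ)..t, deriv φ (a + s) = φ (a + t) - φ a := by
    have : ∀ x ∈ Set.uIcc (0:ℝ) t, HasDerivAt (fun s => φ (a + s)) (deriv φ (a + x)) x := by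
      intro x _
      simpa [Function.comp_def] using (hφ.differentiableAt.hasDerivAt (x := a + x)).comp x
        ((hasDerivAt_id x).const_add a)
    simpa using integral_eq_sub_of_hasDerivAt this hint
  have hrepr : φ (a + t) - φ a - deriv φ a * t
      = ∫ s in (0:ℝ)..t, (deriv φ (a + s) - deriv φ a) := by
    rw [intervalIntegral.integral_sub hint intervalIntegrable_const, hftc]
    simp [mul_comm]
  rw [hrepr, ← Real.norm_eq_abs]
  have hb : ∀ s : ℝ, ‖deriv φ (a + s) - deriv φ a‖ ≤ M * |s| := by
    intro s
    simpa using hlip (a + s) a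
  have step1 : ‖∫ s in (0:ℝ)..t, (deriv φ (a + s) - deriv φ a)‖
      ≤ |∫ s in (0:ℝ)..t, M * abs s| := by
    apply intervalIntegral.norm_integral_le_abs_of_norm_le
    · exact Filter.Eventually.of_forall fun s => hb s
    · exact (continuous_const.mul continuous_abs).intervalIntegrable 0 t
  refine step1.trans (le_of_eq ?_)
  rcases le_total 0 t with ht | ht
  · rw [intervalIntegral.integral_congr (g := fun s => M * s)]
    · have hval : ∫ s in (0:ℝ)..t, M * s = M / 2 * t ^ 2 := by
        rw [intervalIntegral.integral_const_mul, integral_id]; ring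
      rw [hval, abs_of_nonneg (by positivity)]
    · intro s hs
      rw [Set.uIcc_of_le ht] at hs
      dsimp only
      rw [abs_of_nonneg hs.1]
  · rw [intervalIntegral.integral_congr (g := fun s => M * (-s))]
    · have hval : ∫ s in (0:ℝ)..t, M * (-s) = -(M / 2 * t ^ 2) := by
        rw [intervalIntegral.integral_const_mul, intervalIntegral.integral_neg, integral_id]
        ring
      rw [hval, abs_neg, abs_of_nonneg (by positivity)]
    · intro s hs
      rw [Set.uIcc_of_ge ht] at hs
      dsimp only
      rw [abs_of_nonpos hs.2]

end TaylorAux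

/-- To leading order, the variance of the activation output `φ (a + σ)` under a
zero-mean perturbation `σ` equals `φ'(a)²` times the input variance, with explicit
higher-order control via a uniform bound `M` on `φ''`. -/
theorem variance_activation_leading_order {Ω : Type*} [MeasurableSpace Ω]
    (μ : Measure Ω) [IsProbabilityMeasure μ] (σ : Ω → ℝ) (hσm : Measurable σ)
    (hσ0 : (∫ ω, σ ω ∂μ) = 0) (hσ4 : Integrable (fun ω => (σ ω) ^ 4) μ)
    (a : ℝ) (φ : ℝ → ℝ) (M : ℝ)
    (hφ : Differentiable ℝ φ) (hφ' : Differentiable ℝ (deriv φ))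
    (hφ'' : ∀ x : ℝ, |deriv (deriv φ) x| ≤ M) :
    MemLp (fun ω => φ (a + σ ω)) 2 μ ∧
    |variance (fun ω => φ (a + σ ω)) μ - (deriv φ a) ^ 2 * variance σ μ| ≤
      |deriv φ a| * M * (∫ ω, |σ ω| ^ 3 ∂μ)
        + (M ^ 2 / 4) * ∫ ω, (σ ω) ^ 4 ∂μ := by
  have hM : 0 ≤ M := (abs_nonneg _).trans (hφ'' 0)
  set b := deriv φ a with hb
  set R : Ω → ℝ := fun ω => φ (a + σ ω) - φ a - b * σ ω with hRdef
  have hRbd : ∀ ω, |R ω| ≤ M / 2 * σ ω ^ 2 := fun ω => taylor_aux a φ M hφ hφ' hφ'' (σ ω)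
  have hYm : Measurable (fun ω => φ (a + σ ω)) :=
    hφ.continuous.measurable.comp (measurable_const.add hσm)
  have hRm : Measurable R := (hYm.sub measurable_const).sub (measurable_const.mul hσm)
  -- integrability ladder
  have hσ2i : Integrable (fun ω => σ ω ^ 2) μ := by
    refine Integrable.mono' ((integrable_const (1:ℝ)).add hσ4)
      (hσm.pow_const 2).aestronglyMeasurable (Filter.Eventually.of_forall fun ω => ?_)
    rw [Real.norm_eq_abs, abs_of_nonneg (sq_nonneg _)]
    simp only [Pi.add_apply]
    nlinarith [sq_nonneg (σ ω ^ 2 - 1), sq_nonneg (σ ω)]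
  have hσ3i : Integrable (fun ω => |σ ω| ^ 3) μ := by
    refine Integrable.mono' (hσ2i.add hσ4)
      (hσm.abs.pow_const 3).aestronglyMeasurable (Filter.Eventually.of_forall fun ω => ?_)
    rw [Real.norm_eq_abs, abs_of_nonneg (by positivity)]
    simp only [Pi.add_apply]
    have h4 : |σ ω| ^ 4 = σ ω ^ 4 := by
      rw [← abs_pow]; exact abs_of_nonneg (by positivity)
    nlinarith [sq_abs (σ ω), abs_nonneg (σ ω),
      mul_nonneg (sq_nonneg (|σ ω|)) (sq_nonneg (|σ ω| - 1))]
  have hσ2 : MemLp σ 2 μ := (memLp_two_iff_integrable_sq hσm.aestronglyMeasurable).mpr hσ2i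
  have hσi : Integrable σ μ := hσ2.integrable one_le_two
  have hσsq2 : MemLp (fun ω => σ ω ^ 2) 2 μ := by
    refine (memLp_two_iff_integrable_sq (hσm.pow_const 2).aestronglyMeasurable).mpr ?_
    have h : (fun ω => (σ ω ^ 2) ^ 2) = fun ω => σ ω ^ 4 := by funext ω; ring
    rw [h]; exact hσ4
  have hR2 : MemLp R 2 μ := by
    refine MemLp.of_le (hσsq2.const_mul (M / 2)) hRm.aestronglyMeasurable
      (Filter.Eventually.of_forall fun ω => ?_)
    rw [Real.norm_eq_abs, Real.norm_eq_abs,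
      abs_of_nonneg (by positivity : (0:ℝ) ≤ M / 2 * σ ω ^ 2)]
    exact hRbd ω
  have hRi : Integrable R μ := hR2.integrable one_le_two
  have hR2i : Integrable (fun ω => R ω ^ 2) μ := hR2.integrable_sq
  have hYeq : (fun ω => φ (a + σ ω)) = fun ω => φ a + b * σ ω + R ω := by
    funext ω; simp only [hRdef]; ring
  have hY2 : MemLp (fun ω => φ (a + σ ω)) 2 μ := by
    rw [hYeq]
    exact ((memLp_const (φ a)).add (hσ2.const_mul b)).add hR2
  refine ⟨hY2, ?_⟩
  have hσRi : Integrable (fun ω => σ ω * R ω) μ := by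
    refine Integrable.mono' (hσ3i.const_mul (M / 2))
      ((hσm.mul hRm)).aestronglyMeasurable (Filter.Eventually.of_forall fun ω => ?_)
    rw [Real.norm_eq_abs, abs_mul]
    calc |σ ω| * |R ω| ≤ |σ ω| * (M / 2 * σ ω ^ 2) :=
          mul_le_mul_of_nonneg_left (hRbd ω) (abs_nonneg _)
      _ = M / 2 * |σ ω| ^ 3 := by rw [← sq_abs]; ring
  -- means
  set m := ∫ ω, R ω ∂μ with hm
  have hEY : ∫ ω, φ (a + σ ω) ∂μ = φ a + m := by
    have ia : Integrable (fun ω => φ a + b * σ ω) μ :=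
      (integrable_const _).add (hσi.const_mul b)
    rw [hYeq, integral_add ia hRi, integral_add (integrable_const _) (hσi.const_mul b),
      MeasureTheory.integral_const_mul, hσ0]
    simp [hm]
  -- second moment of Y
  have e1 : ∀ ω : Ω, (φ (a + σ ω)) ^ 2 =
      (φ a) ^ 2 + (2 * φ a * b) * σ ω + (2 * φ a) * R ω + b ^ 2 * σ ω ^ 2
        + (2 * b) * (σ ω * R ω) + R ω ^ 2 := by
    intro ω
    have h : φ (a + σ ω) = φ a + b * σ ω + R ω := by simp only [hRdef]; ring
    rw [h]; ring
  have i1 : Integrable (fun ω => (φ a) ^ 2 + (2 * φ a * b) * σ ω) μ :=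
    (integrable_const _).add (hσi.const_mul _)
  have i2 : Integrable (fun ω => φ a ^ 2 + 2 * φ a * b * σ ω + 2 * φ a * R ω) μ :=
    i1.add (hRi.const_mul (2 * φ a))
  have i3 : Integrable
      (fun ω => φ a ^ 2 + 2 * φ a * b * σ ω + 2 * φ a * R ω + b ^ 2 * σ ω ^ 2) μ :=
    i2.add (hσ2i.const_mul (b ^ 2))
  have i4 : Integrable (fun ω => φ a ^ 2 + 2 * φ a * b * σ ω + 2 * φ a * R ω
      + b ^ 2 * σ ω ^ 2 + 2 * b * (σ ω * R ω)) μ :=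
    i3.add (hσRi.const_mul (2 * b))
  have hIY2 : ∫ ω, (φ (a + σ ω)) ^ 2 ∂μ =
      (φ a) ^ 2 + 2 * φ a * m + b ^ 2 * (∫ ω, σ ω ^ 2 ∂μ)
        + 2 * b * (∫ ω, σ ω * R ω ∂μ) + ∫ ω, R ω ^ 2 ∂μ := by
    rw [integral_congr_ae (Filter.Eventually.of_forall e1),
      integral_add i4 hR2i, integral_add i3 (hσRi.const_mul _),
      integral_add i2 (hσ2i.const_mul _), integral_add i1 (hRi.const_mul _),
      integral_add (integrable_const _) (hσi.const_mul _),
      MeasureTheory.integral_const_mul, MeasureTheory.integral_const_mul,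
      MeasureTheory.integral_const_mul, MeasureTheory.integral_const_mul, hσ0]
    simp only [integral_const, probReal_univ, measure_univ, ENNReal.toReal_one, smul_eq_mul, one_mul, mul_zero]
    ring
  -- variances
  have hVarσ : variance σ μ = ∫ ω, σ ω ^ 2 ∂μ := by
    rw [variance_eq_sub hσ2, hσ0]
    simp [Pi.pow_apply]
  have hVarY : variance (fun ω => φ (a + σ ω)) μ =
      b ^ 2 * (∫ ω, σ ω ^ 2 ∂μ) + 2 * b * (∫ ω, σ ω * R ω ∂μ)
        + ((∫ ω, R ω ^ 2 ∂μ) - m ^ 2) := by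
    rw [variance_eq_sub hY2]
    have h : (fun ω => φ (a + σ ω)) ^ 2 = fun ω => (φ (a + σ ω)) ^ 2 := by
      funext ω; simp [Pi.pow_apply]
    rw [h, hIY2, hEY]
    ring
  -- remainder variance nonneg and bounds
  have hVarR : variance R μ = (∫ ω, R ω ^ 2 ∂μ) - m ^ 2 := by
    rw [variance_eq_sub hR2]
    have h : R ^ 2 = fun ω => R ω ^ 2 := by funext ω; simp [Pi.pow_apply]
    rw [h]
  have hQm0 : 0 ≤ (∫ ω, R ω ^ 2 ∂μ) - m ^ 2 := hVarR ▸ variance_nonneg R μ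
  have hQ : (∫ ω, R ω ^ 2 ∂μ) ≤ M ^ 2 / 4 * ∫ ω, σ ω ^ 4 ∂μ := by
    rw [← MeasureTheory.integral_const_mul]
    refine integral_mono hR2i (hσ4.const_mul _) fun ω => ?_
    have h := hRbd ω
    have h2 : R ω ^ 2 ≤ (M / 2 * σ ω ^ 2) ^ 2 := by
      rw [← sq_abs (R ω)]
      exact pow_le_pow_left₀ (abs_nonneg _) h 2
    nlinarith [h2]
  have hS : |∫ ω, σ ω * R ω ∂μ| ≤ M / 2 * ∫ ω, |σ ω| ^ 3 ∂μ := by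
    calc |∫ ω, σ ω * R ω ∂μ| ≤ ∫ ω, |σ ω * R ω| ∂μ := by
          simpa [Real.norm_eq_abs, abs_mul] using
            MeasureTheory.norm_integral_le_integral_norm (fun ω => σ ω * R ω) (μ := μ)
      _ ≤ ∫ ω, M / 2 * |σ ω| ^ 3 ∂μ := by
          refine integral_mono hσRi.abs (hσ3i.const_mul _) fun ω => ?_
          rw [abs_mul]
          calc |σ ω| * |R ω| ≤ |σ ω| * (M / 2 * σ ω ^ 2) :=
                mul_le_mul_of_nonneg_left (hRbd ω) (abs_nonneg _)
            _ = M / 2 * |σ ω| ^ 3 := by rw [← sq_abs]; ring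
      _ = M / 2 * ∫ ω, |σ ω| ^ 3 ∂μ := MeasureTheory.integral_const_mul _ _
  have hI3 : 0 ≤ ∫ ω, |σ ω| ^ 3 ∂μ := integral_nonneg fun ω => by positivity
  rw [hVarY, hVarσ]
  have key : |b ^ 2 * (∫ ω, σ ω ^ 2 ∂μ) + 2 * b * (∫ ω, σ ω * R ω ∂μ)
      + ((∫ ω, R ω ^ 2 ∂μ) - m ^ 2) - b ^ 2 * (∫ ω, σ ω ^ 2 ∂μ)|
      = |2 * b * (∫ ω, σ ω * R ω ∂μ) + ((∫ ω, R ω ^ 2 ∂μ) - m ^ 2)| := by ring_nf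
  rw [key]
  calc |2 * b * (∫ ω, σ ω * R ω ∂μ) + ((∫ ω, R ω ^ 2 ∂μ) - m ^ 2)|
      ≤ |2 * b * (∫ ω, σ ω * R ω ∂μ)| + |(∫ ω, R ω ^ 2 ∂μ) - m ^ 2| := abs_add_le _ _
    _ ≤ |b| * M * (∫ ω, |σ ω| ^ 3 ∂μ) + M ^ 2 / 4 * ∫ ω, σ ω ^ 4 ∂μ := by
        have h1 : |2 * b * (∫ ω, σ ω * R ω ∂μ)| ≤ |b| * M * (∫ ω, |σ ω| ^ 3 ∂μ) := by
          rw [abs_mul, abs_mul, abs_two]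
          nlinarith [mul_le_mul_of_nonneg_left hS (by positivity : (0:ℝ) ≤ 2 * |b|),
            abs_nonneg b]
        have h2 : |(∫ ω, R ω ^ 2 ∂μ) - m ^ 2| ≤ M ^ 2 / 4 * ∫ ω, σ ω ^ 4 ∂μ := by
          rw [abs_of_nonneg hQm0]
          nlinarith [sq_nonneg m]
        linarith
end
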